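/- Let γ : ℝ → EuclideanSpace ℝ (Fin 3) be continuous on [0,1] with γ(0) = γ(1) and ‖γ(t)‖ = 1 for all t ∈ [0,1]. If the origin lies in the convex hull of the image of γ, i.e., 0 ∈ convexHull ℝ (γ '' Set.Icc 0 1), then the length of γ is at least 2π: ENNReal.ofReal (2 * π) ≤ eVariationOn γ (Set.Icc 0 1). -/

import Mathlib

open RealInnerProductSpace Real

open Set

namespace SphCurve

variable {E : Type*} [NormedAddCommGroup E] [InnerProductSpace ℝ E]

noncomputable def sd (x y : E) : ℝ := Real.arccos ⟪x, y⟫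

lemma sd_nonneg (x y : E) : 0 ≤ sd x y := Real.arccos_nonneg _

lemma sd_le_pi (x y : E) : sd x y ≤ π := Real.arccos_le_pi _

lemma inner_unit_le_one {x y : E} (hx : ‖x‖ = 1) (hy : ‖y‖ = 1) : |⟪x, y⟫| ≤ 1 := by
  have := abs_real_inner_le_norm x y
  rw [hx, hy] at this; simpa using this

lemma cos_sd {x y : E} (hx : ‖x‖ = 1) (hy : ‖y‖ = 1) : Real.cos (sd x y) = ⟪x, y⟫ := by
  have h := inner_unit_le_one hx hy
  rw [abs_le] at h
  exact Real.cos_arccos h.1 h.2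

lemma sd_comm (x y : E) : sd x y = sd y x := by rw [sd, sd, real_inner_comm]

lemma sd_self {x : E} (hx : ‖x‖ = 1) : sd x x = 0 := by
  rw [sd, real_inner_self_eq_norm_sq, hx]
  simpa using Real.arccos_one

lemma chord {x y : E} (hx : ‖x‖ = 1) (hy : ‖y‖ = 1) :
    ‖x - y‖ = 2 * Real.sin (sd x y / 2) := by
  have h1 : ‖x - y‖ ^ 2 = 2 - 2 * ⟪x, y⟫ := by
    rw [norm_sub_sq_real, hx, hy]; ring
  have h2 : Real.sin (sd x y / 2) ^ 2 = 1 / 2 - Real.cos (2 * (sd x y / 2)) / 2 :=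
    Real.sin_sq_eq_half_sub _
  rw [show 2 * (sd x y / 2) = sd x y by ring] at h2
  have hs : 0 ≤ Real.sin (sd x y / 2) :=
    Real.sin_nonneg_of_nonneg_of_le_pi (by linarith [sd_nonneg x y])
      (by linarith [sd_le_pi x y, Real.pi_pos])
  have h3 : ‖x - y‖ ^ 2 = (2 * Real.sin (sd x y / 2)) ^ 2 := by
    rw [h1, ← cos_sd hx hy]; nlinarith [h2]
  calc ‖x - y‖ = √(‖x - y‖ ^ 2) := (Real.sqrt_sq (norm_nonneg _)).symm
    _ = √((2 * Real.sin (sd x y / 2)) ^ 2) := by rw [h3]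
    _ = 2 * Real.sin (sd x y / 2) := Real.sqrt_sq (by linarith)

lemma arccos_antitone : Antitone Real.arccos := by
  intro a b h
  rw [Real.arccos_eq_pi_div_two_sub_arcsin, Real.arccos_eq_pi_div_two_sub_arcsin]
  linarith [Real.monotone_arcsin h]

lemma sd_triangle {x y z : E} (hx : ‖x‖ = 1) (hy : ‖y‖ = 1) (hz : ‖z‖ = 1) :
    sd x z ≤ sd x y + sd y z := by
  rcases le_or_gt π (sd x y + sd y z) with h | h
  · exact (Real.arccos_le_pi _).trans h
  · set α := sd x y with hα
    set β := sd y z with hβ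
    have hca : Real.cos α = ⟪x, y⟫ := cos_sd hx hy
    have hcb : Real.cos β = ⟪y, z⟫ := cos_sd hy hz
    have hsa : 0 ≤ Real.sin α :=
      Real.sin_nonneg_of_nonneg_of_le_pi (Real.arccos_nonneg _) (Real.arccos_le_pi _)
    have hsb : 0 ≤ Real.sin β :=
      Real.sin_nonneg_of_nonneg_of_le_pi (Real.arccos_nonneg _) (Real.arccos_le_pi _)
    have pyta := Real.sin_sq_add_cos_sq α
    have pytb := Real.sin_sq_add_cos_sq β
    have hna : ‖x - Real.cos α • y‖ = Real.sin α := by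
      have h2 : ‖x - Real.cos α • y‖ ^ 2 = Real.sin α ^ 2 := by
        rw [norm_sub_sq_real, norm_smul, real_inner_smul_right, hx, hy, ← hca, mul_one,
          norm_eq_abs, sq_abs]
        nlinarith [pyta]
      calc ‖x - Real.cos α • y‖ = √(‖x - Real.cos α • y‖ ^ 2) :=
            (Real.sqrt_sq (norm_nonneg _)).symm
        _ = √(Real.sin α ^ 2) := by rw [h2]
        _ = Real.sin α := Real.sqrt_sq hsa
    have hnb : ‖z - Real.cos β • y‖ = Real.sin β := by
      have h2 : ‖z - Real.cos β • y‖ ^ 2 = Real.sin β ^ 2 := by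
        rw [norm_sub_sq_real, norm_smul, real_inner_smul_right, ← real_inner_comm z y, ← hcb,
          hz, hy, mul_one, norm_eq_abs, sq_abs]
        nlinarith [pytb]
      calc ‖z - Real.cos β • y‖ = √(‖z - Real.cos β • y‖ ^ 2) :=
            (Real.sqrt_sq (norm_nonneg _)).symm
        _ = √(Real.sin β ^ 2) := by rw [h2]
        _ = Real.sin β := Real.sqrt_sq hsb
    have hCS := abs_real_inner_le_norm (x - Real.cos α • y) (z - Real.cos β • y)
    rw [hna, hnb] at hCS
    have hexp : ⟪x - Real.cos α • y, z - Real.cos β • y⟫ =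
        ⟪x, z⟫ - Real.cos β * ⟪x, y⟫ - Real.cos α * ⟪y, z⟫
          + Real.cos α * Real.cos β * ⟪y, y⟫ := by
      rw [inner_sub_left, inner_sub_right, inner_sub_right, real_inner_smul_left,
        real_inner_smul_left, real_inner_smul_right, real_inner_smul_right]
      ring
    rw [hexp, real_inner_self_eq_norm_sq, hy, ← hca, ← hcb] at hCS
    have hge : Real.cos (α + β) ≤ ⟪x, z⟫ := by
      rw [Real.cos_add]
      have h1 := (abs_le.1 hCS).1
      nlinarith [h1]
    have h0 : (0:ℝ) ≤ α + β := add_nonneg (Real.arccos_nonneg _) (Real.arccos_nonneg _)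
    have hfin : sd x z ≤ Real.arccos (Real.cos (α + β)) := arccos_antitone hge
    rwa [Real.arccos_cos h0 h.le] at hfin

lemma sd_chain {u : ℕ → E} (hu : ∀ i, ‖u i‖ = 1) (n : ℕ) :
    sd (u 0) (u n) ≤ ∑ i ∈ Finset.range n, sd (u i) (u (i + 1)) := by
  induction n with
  | zero =>
    simp [sd, real_inner_self_eq_norm_sq, hu 0]
  | succ n ih =>
    rw [Finset.sum_range_succ]
    calc sd (u 0) (u (n + 1)) ≤ sd (u 0) (u n) + sd (u n) (u (n + 1)) :=
          sd_triangle (hu 0) (hu n) (hu (n + 1))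
      _ ≤ _ := by linarith


lemma sd_le_chord {x y : E} (hx : ‖x‖ = 1) (hy : ‖y‖ = 1) :
    sd x y ≤ π / 2 * ‖x - y‖ := by
  have h := Real.mul_le_sin (x := sd x y / 2) (by linarith [sd_nonneg x y])
    (by linarith [sd_le_pi x y])
  have hc := chord hx hy
  have hπ := Real.pi_pos
  rw [hc]
  rw [div_mul_eq_mul_div, div_le_iff₀ hπ] at h
  nlinarith

lemma chord_control {ε : ℝ} (hε : 0 < ε) :
    ∃ δ > 0, ∀ x y : E, ‖x‖ = 1 → ‖y‖ = 1 → ‖x - y‖ ≤ δ →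
      sd x y ≤ (1 + ε) * ‖x - y‖ := by
  have hπ := Real.pi_pos
  set r := min 1 (Real.sqrt (ε / (1 + ε))) with hr
  have hr0 : 0 < r := lt_min one_pos (Real.sqrt_pos.2 (by positivity))
  refine ⟨2 / π * r, by positivity, fun x y hx hy hxy => ?_⟩
  set d := sd x y with hd
  have hd0 : 0 ≤ d := sd_nonneg x y
  have hdle : d ≤ r := by
    have := sd_le_chord hx hy
    calc d ≤ π / 2 * ‖x - y‖ := this
      _ ≤ π / 2 * (2 / π * r) := by
          apply mul_le_mul_of_nonneg_left hxy (by positivity)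
      _ = r := by field_simp
  have hd1 : d ≤ 1 := hdle.trans (min_le_left _ _)
  have hdsq : d ^ 2 ≤ ε / (1 + ε) := by
    have h1 : d ≤ Real.sqrt (ε / (1 + ε)) := hdle.trans (min_le_right _ _)
    have h2 : Real.sqrt (ε / (1 + ε)) ^ 2 = ε / (1 + ε) := Real.sq_sqrt (by positivity)
    nlinarith [Real.sqrt_nonneg (ε / (1 + ε))]
  rcases eq_or_lt_of_le hd0 with h0 | h0
  · rw [← h0]; positivity
  · -- 0 < d
    have hsin := Real.sin_gt_sub_cube (x := d / 2) (by linarith)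
    have hc : ‖x - y‖ = 2 * Real.sin (d / 2) := chord hx hy
    have hcge : ‖x - y‖ ≥ d - d ^ 3 / 16 := by rw [hc]; nlinarith
    -- want d ≤ (1+ε) ‖x-y‖
    have key : (1 + ε) * (d - d ^ 3 / 16) ≥ d := by
      have h3 : d ^ 3 = d * d ^ 2 := by ring
      have h4 : (1 + ε) * d ^ 2 ≤ ε := by
        have heq : ε / (1 + ε) * (1 + ε) = ε := div_mul_cancel₀ _ (by positivity)
        nlinarith [mul_le_mul_of_nonneg_left hdsq (by positivity : (0:ℝ) ≤ 1 + ε)]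
      nlinarith
    nlinarith

lemma sd_le_evar {γ : ℝ → E} {a b : ℝ} (hab : a ≤ b)
    (hcont : ContinuousOn γ (Icc a b)) (hunit : ∀ t ∈ Icc a b, ‖γ t‖ = 1) :
    ENNReal.ofReal (sd (γ a) (γ b)) ≤ eVariationOn γ (Icc a b) := by
  rcases eq_or_ne (eVariationOn γ (Icc a b)) ⊤ with hV | hV
  · rw [hV]; exact le_top
  rcases eq_or_lt_of_le hab with rfl | hab'
  · rw [sd_self (hunit a ⟨le_refl a, le_refl a⟩)]
    simp
  have hba : (0:ℝ) < b - a := sub_pos.2 hab'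
  set T := (eVariationOn γ (Icc a b)).toReal with hT
  have hT0 : 0 ≤ T := ENNReal.toReal_nonneg
  have key : ∀ ε : ℝ, 0 < ε → sd (γ a) (γ b) ≤ (1 + ε) * T := by
    intro ε hε
    obtain ⟨δ, hδ0, hδ⟩ := chord_control (E := E) hε
    have hUC : UniformContinuousOn γ (Icc a b) :=
      isCompact_Icc.uniformContinuousOn_of_continuous hcont
    rw [Metric.uniformContinuousOn_iff] at hUC
    obtain ⟨τ, hτ0, hτ⟩ := hUC δ hδ0
    obtain ⟨n, hn⟩ := exists_nat_gt ((b - a) / τ)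
    have hn0 : 0 < n := by
      have h' : 0 < (b - a) / τ := by positivity
      exact_mod_cast h'.trans hn
    have hnR : (0:ℝ) < n := by exact_mod_cast hn0
    set c := (b - a) / n with hc
    have hc0 : 0 ≤ c := by positivity
    have hcτ : c < τ := by
      rw [hc, div_lt_iff₀ hnR]
      rw [div_lt_iff₀ hτ0] at hn
      nlinarith
    set u : ℕ → ℝ := fun i => a + (min i n : ℕ) * c with hu
    have humem : ∀ i, u i ∈ Icc a b := by
      intro i
      have h1 : (0:ℝ) ≤ (min i n : ℕ) * c := by positivity
      have h2 : ((min i n : ℕ) : ℝ) ≤ (n : ℝ) := by exact_mod_cast min_le_right i n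
      have h3 : ((min i n : ℕ) : ℝ) * c ≤ n * c := mul_le_mul_of_nonneg_right h2 hc0
      have h4 : (n : ℝ) * c = b - a := by rw [hc]; field_simp
      exact ⟨by simp only [hu]; linarith, by simp only [hu]; linarith⟩
    have humono : Monotone u := by
      intro i j hij
      simp only [hu]
      have h1 : ((min i n : ℕ) : ℝ) ≤ ((min j n : ℕ) : ℝ) := by
        exact_mod_cast min_le_min_right n hij
      nlinarith
    have hu0 : u 0 = a := by simp [hu]
    have hun : u n = b := by
      simp only [hu, min_self]
      rw [hc]; field_simp; ring
    have hchordsmall : ∀ i : ℕ, ‖γ (u i) - γ (u (i+1))‖ ≤ δ := by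
      intro i
      have hm1 : min i n ≤ min (i+1) n := min_le_min_right n (Nat.le_succ i)
      have hm2 : min (i+1) n ≤ min i n + 1 := by
        rcases le_or_gt (i+1) n with h | h
        · rw [min_eq_left h, min_eq_left (by omega)]
        · rw [min_eq_right (by omega)]; omega
      have hd1 : u i ≤ u (i+1) := humono (Nat.le_succ i)
      have hd2 : u (i+1) - u i ≤ c := by
        simp only [hu]
        have : ((min (i+1) n : ℕ) : ℝ) ≤ ((min i n : ℕ) : ℝ) + 1 := by exact_mod_cast hm2
        nlinarith
      have h1 : dist (u i) (u (i+1)) < τ := by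
        rw [Real.dist_eq, abs_of_nonpos (by linarith)]
        linarith
      have := hτ (u i) (humem i) (u (i+1)) (humem (i+1)) h1
      rw [dist_eq_norm] at this
      exact this.le
    have hsum : ∑ i ∈ Finset.range n, ‖γ (u (i+1)) - γ (u i)‖ ≤ T := by
      have h1 := eVariationOn.sum_le (f := γ) (n := n) humono (fun i => humem i)
      have h2 : ∑ i ∈ Finset.range n, edist (γ (u (i+1))) (γ (u i)) =
          ENNReal.ofReal (∑ i ∈ Finset.range n, ‖γ (u (i+1)) - γ (u i)‖) := by
        rw [ENNReal.ofReal_sum_of_nonneg (fun i _ => norm_nonneg _)]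
        exact Finset.sum_congr rfl fun i _ => by rw [edist_dist, dist_eq_norm]
      rw [h2] at h1
      exact (ENNReal.ofReal_le_iff_le_toReal hV).1 h1
    have hchain := sd_chain (u := fun i => γ (u i)) (fun i => hunit (u i) (humem i)) n
    simp only [hu0, hun] at hchain
    calc sd (γ a) (γ b) ≤ ∑ i ∈ Finset.range n, sd (γ (u i)) (γ (u (i+1))) := hchain
      _ ≤ ∑ i ∈ Finset.range n, (1 + ε) * ‖γ (u i) - γ (u (i+1))‖ :=
          Finset.sum_le_sum fun i _ => hδ _ _ (hunit _ (humem i)) (hunit _ (humem (i+1)))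
            (hchordsmall i)
      _ = (1 + ε) * ∑ i ∈ Finset.range n, ‖γ (u (i+1)) - γ (u i)‖ := by
          rw [Finset.mul_sum]
          exact Finset.sum_congr rfl fun i _ => by rw [norm_sub_rev]
      _ ≤ (1 + ε) * T := by nlinarith
  have hle : sd (γ a) (γ b) ≤ T := by
    refine le_of_forall_pos_le_add fun ε' hε' => ?_
    have h1 := key (ε' / (T + 1)) (by positivity)
    have h2 : ε' / (T + 1) * T ≤ ε' := by
      rw [div_mul_eq_mul_div, div_le_iff₀ (by positivity)]
      nlinarith
    nlinarith
  calc ENNReal.ofReal (sd (γ a) (γ b)) ≤ ENNReal.ofReal T := ENNReal.ofReal_le_ofReal hle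
    _ = eVariationOn γ (Icc a b) := ENNReal.ofReal_toReal hV

lemma evar_Icc_add (γ : ℝ → E) {a b c : ℝ} (hab : a ≤ b) (hbc : b ≤ c) :
    eVariationOn γ (Icc a b) + eVariationOn γ (Icc b c) = eVariationOn γ (Icc a c) := by
  have h := eVariationOn.Icc_add_Icc γ (s := Icc a c) hab hbc ⟨hab, hbc⟩
  rw [Set.Icc_inter_Icc, Set.Icc_inter_Icc, sup_idem, min_eq_right hbc,
    max_eq_right hab, min_self, Set.inter_self] at h
  exact h

lemma cut_of_big {γ : ℝ → E} {a t b : ℝ} (hat : a ≤ t) (htb : t ≤ b)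
    (hfin : eVariationOn γ (Icc a b) ≠ ⊤) {e : ENNReal}
    (he : e ≤ eVariationOn γ (Icc a b))
    (hbig : eVariationOn γ (Icc a b) - e ≤ eVariationOn γ (Icc a t)) :
    eVariationOn γ (Icc t b) ≤ e := by
  have hadd := evar_Icc_add γ hat htb
  have hXle : eVariationOn γ (Icc a t) ≤ eVariationOn γ (Icc a b) := by
    rw [← hadd]; exact le_self_add
  have hXfin : eVariationOn γ (Icc a t) ≠ ⊤ := ne_top_of_le_ne_top hfin hXle
  have hY : eVariationOn γ (Icc t b) =
      eVariationOn γ (Icc a b) - eVariationOn γ (Icc a t) :=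
    ENNReal.eq_sub_of_add_eq hXfin (by rw [add_comm]; exact hadd)
  rw [hY]
  calc eVariationOn γ (Icc a b) - eVariationOn γ (Icc a t)
      ≤ eVariationOn γ (Icc a b) - (eVariationOn γ (Icc a b) - e) :=
        tsub_le_tsub_left hbig _
    _ = e := ENNReal.sub_sub_cancel hfin he

lemma left_approx {γ : ℝ → E} {a b : ℝ} (hab : a < b) (hcont : ContinuousOn γ (Icc a b))
    (hfin : eVariationOn γ (Icc a b) ≠ ⊤) {ε : ℝ} (hε : 0 < ε) :
    ∃ t, t ∈ Ico a b ∧ eVariationOn γ (Icc t b) ≤ ENNReal.ofReal ε := by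
  classical
  rcases le_or_gt (eVariationOn γ (Icc a b)) (ENNReal.ofReal ε) with hle | hlt
  · refine ⟨a, ⟨le_refl a, hab⟩, le_trans (eVariationOn.mono γ (fun x hx => hx)) hle⟩
  have hε2 : (0:ℝ) < ε / 2 := by linarith
  have he2 : (0:ENNReal) < ENNReal.ofReal (ε / 2) := ENNReal.ofReal_pos.2 hε2
  have hV0 : eVariationOn γ (Icc a b) ≠ 0 := by
    intro h0
    rw [h0] at hlt
    exact (not_lt_of_ge zero_le) hlt
  have hsub : eVariationOn γ (Icc a b) - ENNReal.ofReal (ε / 2) < eVariationOn γ (Icc a b) :=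
    ENNReal.sub_lt_self hfin hV0 he2.ne'
  have hsub' : eVariationOn γ (Icc a b) - ENNReal.ofReal (ε / 2) <
      ⨆ p : ℕ × { u : ℕ → ℝ // Monotone u ∧ ∀ i, u i ∈ Icc a b },
        ∑ i ∈ Finset.range p.1, edist (γ (p.2.1 (i + 1))) (γ (p.2.1 i)) := hsub
  obtain ⟨⟨n, ⟨u, hu, us⟩⟩, hsum⟩ := lt_iSup_iff.1 hsub'
  simp only at hsum
  -- hsum : V - ofReal (ε/2) < ∑ i in range n, edist (γ (u (i+1))) (γ (u i))
  by_cases hexb : ∃ i, u i = b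
  · -- some partition point equals b
    rcases Nat.eq_zero_or_pos (Nat.find hexb) with hk0 | hkpos
    · -- all points = b, sum is 0
      exfalso
      have h0 : u 0 = b := by
        have := Nat.find_spec hexb
        rwa [hk0] at this
      have hall : ∀ i, u i = b := by
        intro i
        refine le_antisymm (us i).2 ?_
        rw [← h0]
        exact hu (Nat.zero_le i)
      have : ∑ i ∈ Finset.range n, edist (γ (u (i + 1))) (γ (u i)) = 0 := by
        refine Finset.sum_eq_zero fun i _ => ?_
        rw [hall i, hall (i + 1), edist_self]
      rw [this] at hsum
      exact (not_lt_of_ge zero_le) hsum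
    · obtain ⟨m, hmk⟩ : ∃ m, Nat.find hexb = m + 1 := ⟨Nat.find hexb - 1, by omega⟩
      have hk : u (m + 1) = b := by
        have := Nat.find_spec hexb
        rwa [hmk] at this
      have hum : u m < b :=
        lt_of_le_of_ne (us m).2 (Nat.find_min hexb (by rw [hmk]; exact Nat.lt_succ_self m))
      -- continuity at b
      have hcb : ContinuousWithinAt γ (Icc a b) b := hcont b ⟨hab.le, le_refl b⟩
      rw [Metric.continuousWithinAt_iff] at hcb
      obtain ⟨δ, hδ0, hδ⟩ := hcb (ε / 2) hε2
      set t := max (u m) (b - δ / 2) with htdef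
      have hta : a ≤ t := le_trans (us m).1 (le_max_left _ _)
      have htb : t < b := max_lt hum (by linarith)
      have humt : u m ≤ t := le_max_left _ _
      have hdistt : dist t b < δ := by
        rw [Real.dist_eq, abs_of_nonpos (by linarith)]
        have : b - δ / 2 ≤ t := le_max_right _ _
        linarith
      have hedist : edist (γ t) (γ b) ≤ ENNReal.ofReal (ε / 2) := by
        rw [edist_dist]
        exact ENNReal.ofReal_le_ofReal (hδ ⟨hta, htb.le⟩ hdistt).le
      set v : ℕ → ℝ := fun i => if i ≤ m then u i else t with hvdef
      have hvmono : Monotone v := by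
        apply monotone_nat_of_le_succ
        intro i
        simp only [hvdef]
        rcases le_or_gt (i + 1) m with h1 | h1
        · rw [if_pos h1, if_pos (le_trans (Nat.le_succ i) h1)]
          exact hu (Nat.le_succ i)
        · rw [if_neg (show ¬ i + 1 ≤ m by omega)]
          rcases le_or_gt i m with h2 | h2
          · rw [if_pos h2]
            exact le_trans (hu h2) humt
          · rw [if_neg (show ¬ i ≤ m by omega)]
      have hvmem : ∀ i, v i ∈ Icc a t := by
        intro i
        simp only [hvdef]
        split_ifs with h
        · exact ⟨(us i).1, le_trans (hu h) humt⟩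
        · exact ⟨hta, le_refl t⟩
      have hterm : ∀ i ∈ Finset.range n,
          edist (γ (u (i + 1))) (γ (u i)) ≤
            edist (γ (v (i + 1))) (γ (v i)) +
              (if i = m then ENNReal.ofReal (ε / 2) else 0) := by
        intro i _
        rcases lt_trichotomy i m with h1 | h1 | h1
        · rw [if_neg h1.ne]
          simp only [hvdef, if_pos h1.le, if_pos (Nat.succ_le_of_lt h1), add_zero]
          exact le_refl _
        · subst h1
          rw [if_pos rfl]
          have hvi : v i = u i := by simp [hvdef]
          have hvi1 : v (i + 1) = t := by simp only [hvdef]; rw [if_neg (by omega)]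
          have hui1 : u (i + 1) = b := hk
          rw [hvi, hvi1, hui1]
          calc edist (γ b) (γ (u i)) ≤ edist (γ b) (γ t) + edist (γ t) (γ (u i)) :=
                edist_triangle _ _ _
            _ ≤ edist (γ t) (γ (u i)) + ENNReal.ofReal (ε / 2) := by
                rw [add_comm]
                exact add_le_add_right (by rwa [edist_comm] at hedist) _
        · rw [if_neg h1.ne']
          have hui : u i = b := by
            refine le_antisymm (us i).2 ?_
            rw [← hk]
            exact hu (by omega)
          have hui1 : u (i + 1) = b := by
            refine le_antisymm (us (i + 1)).2 ?_
            rw [← hk]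
            exact hu (by omega)
          rw [hui, hui1, edist_self]
          exact zero_le
      have hsum2 : ∑ i ∈ Finset.range n, edist (γ (u (i + 1))) (γ (u i)) ≤
          (∑ i ∈ Finset.range n, edist (γ (v (i + 1))) (γ (v i))) + ENNReal.ofReal (ε / 2) := by
        calc ∑ i ∈ Finset.range n, edist (γ (u (i + 1))) (γ (u i))
            ≤ ∑ i ∈ Finset.range n, (edist (γ (v (i + 1))) (γ (v i)) +
                (if i = m then ENNReal.ofReal (ε / 2) else 0)) := Finset.sum_le_sum hterm
          _ = (∑ i ∈ Finset.range n, edist (γ (v (i + 1))) (γ (v i))) +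
                ∑ i ∈ Finset.range n, (if i = m then ENNReal.ofReal (ε / 2) else 0) :=
              Finset.sum_add_distrib
          _ ≤ _ := by
              refine add_le_add_right ?_ _
              rw [Finset.sum_ite_eq' (Finset.range n) m (fun _ => ENNReal.ofReal (ε / 2))]
              split_ifs <;> simp
      have hbig : eVariationOn γ (Icc a b) - ENNReal.ofReal ε ≤ eVariationOn γ (Icc a t) := by
        rw [tsub_le_iff_right]
        have hVle : eVariationOn γ (Icc a b) ≤
            (∑ i ∈ Finset.range n, edist (γ (u (i + 1))) (γ (u i))) +
            ENNReal.ofReal (ε / 2) := by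
          have hle2 : ENNReal.ofReal (ε / 2) ≤ eVariationOn γ (Icc a b) :=
            le_trans (ENNReal.ofReal_le_ofReal (by linarith : ε / 2 ≤ ε)) hlt.le
          calc eVariationOn γ (Icc a b)
              = (eVariationOn γ (Icc a b) - ENNReal.ofReal (ε / 2)) + ENNReal.ofReal (ε / 2) :=
                (tsub_add_cancel_of_le hle2).symm
            _ ≤ _ := add_le_add_left hsum.le _
        calc eVariationOn γ (Icc a b) ≤ (∑ i ∈ Finset.range n, edist (γ (u (i + 1))) (γ (u i))) +
              ENNReal.ofReal (ε / 2) := hVle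
          _ ≤ ((∑ i ∈ Finset.range n, edist (γ (v (i + 1))) (γ (v i))) +
                ENNReal.ofReal (ε / 2)) + ENNReal.ofReal (ε / 2) := add_le_add_left hsum2 _
          _ = (∑ i ∈ Finset.range n, edist (γ (v (i + 1))) (γ (v i))) + ENNReal.ofReal ε := by
              rw [add_assoc, ← ENNReal.ofReal_add hε2.le hε2.le]
              norm_num
          _ ≤ eVariationOn γ (Icc a t) + ENNReal.ofReal ε :=
              add_le_add_left (eVariationOn.sum_le (f := γ) (n := n) hvmono hvmem) _
      exact ⟨t, ⟨hta, htb⟩, cut_of_big hta htb.le hfin hlt.le hbig⟩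
  · -- no partition point equals b; u n < b
    push_neg at hexb
    have hun : u n < b := lt_of_le_of_ne (us n).2 (hexb n)
    set t := u n with htdef
    set v : ℕ → ℝ := fun i => u (min i n) with hvdef
    have hvmono : Monotone v := fun i j hij => hu (min_le_min_right n hij)
    have hvmem : ∀ i, v i ∈ Icc a t := fun i => ⟨(us _).1, hu (min_le_right i n)⟩
    have hveq : ∑ i ∈ Finset.range n, edist (γ (v (i + 1))) (γ (v i)) =
        ∑ i ∈ Finset.range n, edist (γ (u (i + 1))) (γ (u i)) := by
      refine Finset.sum_congr rfl fun i hi => ?_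
      rw [Finset.mem_range] at hi
      simp only [hvdef]
      rw [min_eq_left hi.le, min_eq_left (by omega : i + 1 ≤ n)]
    have hbig : eVariationOn γ (Icc a b) - ENNReal.ofReal ε ≤ eVariationOn γ (Icc a t) := by
      calc eVariationOn γ (Icc a b) - ENNReal.ofReal ε
          ≤ eVariationOn γ (Icc a b) - ENNReal.ofReal (ε / 2) :=
            tsub_le_tsub_left (ENNReal.ofReal_le_ofReal (by linarith)) _
        _ ≤ ∑ i ∈ Finset.range n, edist (γ (u (i + 1))) (γ (u i)) := hsum.le
        _ = ∑ i ∈ Finset.range n, edist (γ (v (i + 1))) (γ (v i)) := hveq.symm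
        _ ≤ eVariationOn γ (Icc a t) := eVariationOn.sum_le (f := γ) (n := n) hvmono hvmem
    exact ⟨t, ⟨(us n).1, hun⟩, cut_of_big (us n).1 hun.le hfin hlt.le hbig⟩

lemma right_approx {γ : ℝ → E} {a b : ℝ} (hab : a < b) (hcont : ContinuousOn γ (Icc a b))
    (hfin : eVariationOn γ (Icc a b) ≠ ⊤) {ε : ℝ} (hε : 0 < ε) :
    ∃ t, t ∈ Ioc a b ∧ eVariationOn γ (Icc a t) ≤ ENNReal.ofReal ε := by
  set φ : ℝ → ℝ := fun s => a + b - s with hφdef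
  have himg : ∀ c d : ℝ, φ '' Icc c d = Icc (a + b - d) (a + b - c) := fun c d => by
    simp only [hφdef]
    exact Set.image_const_sub_Icc (a := a + b) (b := c) (c := d)
  have hmaps : Set.MapsTo φ (Icc a b) (Icc a b) := fun x hx => by
    simp only [hφdef, Set.mem_Icc] at hx ⊢
    constructor <;> linarith [hx.1, hx.2]
  have hcont' : ContinuousOn (γ ∘ φ) (Icc a b) :=
    hcont.comp ((continuous_const.sub continuous_id).continuousOn) hmaps
  have hanti : ∀ c d : ℝ, AntitoneOn φ (Icc c d) := fun c d x _ y _ h => by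
    simp only [hφdef]; linarith
  have hcompab : eVariationOn (γ ∘ φ) (Icc a b) = eVariationOn γ (Icc a b) := by
    rw [eVariationOn.comp_eq_of_antitoneOn γ φ (hanti a b), himg a b,
      add_sub_cancel_right, add_sub_cancel_left]
  have hfin' : eVariationOn (γ ∘ φ) (Icc a b) ≠ ⊤ := by rwa [hcompab]
  obtain ⟨t, ⟨hta, htb⟩, hcut⟩ := left_approx hab hcont' hfin' hε
  refine ⟨a + b - t, ⟨by linarith, by linarith⟩, ?_⟩
  have hcompt : eVariationOn (γ ∘ φ) (Icc t b) = eVariationOn γ (Icc a (a + b - t)) := by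
    rw [eVariationOn.comp_eq_of_antitoneOn γ φ (hanti t b), himg t b,
      add_sub_cancel_right]
  rwa [hcompt] at hcut


end SphCurve

open SphCurve

set_option maxHeartbeats 1000000 in
/-- A closed curve on the unit sphere `S² ⊆ ℝ³` whose convex hull contains the center of the
sphere has length at least `2π`. -/
theorem spherical_curve_through_center_length_ge
    (γ : ℝ → EuclideanSpace ℝ (Fin 3))
    (hcont : ContinuousOn γ (Set.Icc 0 1)) (hclosed : γ 0 = γ 1)
    (hsphere : ∀ t ∈ Set.Icc (0 : ℝ) 1, ‖γ t‖ = 1)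
    (hhull : (0 : EuclideanSpace ℝ (Fin 3)) ∈ convexHull ℝ (γ '' Set.Icc 0 1)) :
    ENNReal.ofReal (2 * π) ≤ eVariationOn γ (Set.Icc 0 1) := by
  by_contra hcon
  push_neg at hcon
  have hfin : eVariationOn γ (Set.Icc (0:ℝ) 1) ≠ ⊤ := hcon.ne_top
  set L := (eVariationOn γ (Set.Icc (0:ℝ) 1)).toReal with hLdef
  have hL2π : L < 2 * π := ENNReal.toReal_lt_of_lt_ofReal hcon
  have hL0 : 0 ≤ L := ENNReal.toReal_nonneg
  have hπ := Real.pi_pos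
  have hfinsub : ∀ a b : ℝ, 0 ≤ a → b ≤ 1 → eVariationOn γ (Set.Icc a b) ≠ ⊤ := fun a b ha hb =>
    ne_top_of_le_ne_top hfin (eVariationOn.mono γ (Set.Icc_subset_Icc ha hb))
  have hadd : ∀ a b c : ℝ, 0 ≤ a → a ≤ b → b ≤ c → c ≤ 1 →
      (eVariationOn γ (Set.Icc a b)).toReal + (eVariationOn γ (Set.Icc b c)).toReal
        = (eVariationOn γ (Set.Icc a c)).toReal := by
    intro a b c h0 hab hbc hc1
    rw [← ENNReal.toReal_add (hfinsub a b h0 (hbc.trans hc1)) (hfinsub b c (h0.trans hab) hc1),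
      evar_Icc_add γ hab hbc]
  set ρ : ℝ → ℝ := fun t => (eVariationOn γ (Set.Icc 0 t)).toReal with hρdef
  have hρ0 : ρ 0 = 0 := by
    simp only [hρdef, Set.Icc_self]
    rw [eVariationOn.subsingleton γ (Set.subsingleton_singleton)]
    simp
  have hρ1 : ρ 1 = L := rfl
  have hmono : ∀ s t : ℝ, 0 ≤ s → s ≤ t → t ≤ 1 → ρ s ≤ ρ t := by
    intro s t h0 hst ht1
    exact (ENNReal.toReal_le_toReal (hfinsub 0 s le_rfl (hst.trans ht1))
      (hfinsub 0 t le_rfl ht1)).2 (eVariationOn.mono γ (Set.Icc_subset_Icc le_rfl hst))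
  set S := {t : ℝ | t ∈ Set.Icc (0:ℝ) 1 ∧ ρ t ≤ L / 2} with hSdef
  have hS0 : (0:ℝ) ∈ S := ⟨⟨le_rfl, zero_le_one⟩, by rw [hρ0]; positivity⟩
  have hSbdd : BddAbove S := ⟨1, fun t ht => ht.1.2⟩
  set c := sSup S with hcdef
  have hc0 : 0 ≤ c := le_csSup hSbdd hS0
  have hc1 : c ≤ 1 := csSup_le ⟨0, hS0⟩ fun t ht => ht.1.2
  set η := (2 * π - L) / 4 with hηdef
  have hη : 0 < η := by simp only [hηdef]; linarith
  have hhalf : L / 2 + η < π := by simp only [hηdef]; linarith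
  -- small toReal helper
  have htRle : ∀ (X : ENNReal), X ≠ ⊤ → X ≤ ENNReal.ofReal η → X.toReal ≤ η := by
    intro X hX h
    have := (ENNReal.toReal_le_toReal hX ENNReal.ofReal_ne_top).2 h
    rwa [ENNReal.toReal_ofReal hη.le] at this
  have hA : ρ c ≤ L / 2 + η := by
    rcases eq_or_lt_of_le hc0 with hc0' | hc0'
    · rw [← hc0', hρ0]; positivity
    · obtain ⟨t, ⟨ht0, htc⟩, hcut⟩ := left_approx hc0'
        (hcont.mono (Set.Icc_subset_Icc le_rfl hc1)) (hfinsub 0 c le_rfl hc1) hη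
      have htS : ρ t ≤ L / 2 := by
        obtain ⟨s, hsS, hts⟩ := exists_lt_of_lt_csSup ⟨0, hS0⟩ htc
        exact le_trans (hmono t s ht0 hts.le hsS.1.2) hsS.2
      have h1 : ρ t + (eVariationOn γ (Set.Icc t c)).toReal = ρ c :=
        hadd 0 t c le_rfl ht0 htc.le hc1
      have h2 := htRle _ (hfinsub t c ht0 hc1) hcut
      linarith
  set β := (eVariationOn γ (Set.Icc c 1)).toReal with hβdef
  have hρcβ : ρ c + β = L := hadd 0 c 1 le_rfl hc0 hc1 le_rfl
  have hB : β ≤ L / 2 + η := by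
    rcases eq_or_lt_of_le hc1 with hc1' | hc1'
    · rw [hβdef, hc1', Set.Icc_self, eVariationOn.subsingleton γ (Set.subsingleton_singleton)]
      simp; positivity
    · obtain ⟨t, ⟨hct, ht1⟩, hcut⟩ := right_approx hc1'
        (hcont.mono (Set.Icc_subset_Icc hc0 le_rfl)) (hfinsub c 1 hc0 le_rfl) hη
      have htnS : L / 2 < ρ t := by
        by_contra hle
        push_neg at hle
        exact absurd (le_csSup hSbdd ⟨⟨hc0.trans hct.le, ht1⟩, hle⟩) (not_le.2 hct)
      have h1 : (eVariationOn γ (Set.Icc c t)).toReal + (eVariationOn γ (Set.Icc t 1)).toReal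
          = β := hadd c t 1 hc0 hct.le ht1 le_rfl
      have h2 : ρ t + (eVariationOn γ (Set.Icc t 1)).toReal = L :=
        hadd 0 t 1 le_rfl (hc0.trans hct.le) ht1 le_rfl
      have h3 := htRle _ (hfinsub c t hc0 ht1) hcut
      linarith
  have hρcπ : ρ c < π := lt_of_le_of_lt hA hhalf
  have hβπ : β < π := lt_of_le_of_lt hB hhalf
  -- spherical distance bounded by variation
  have sdle : ∀ a b : ℝ, 0 ≤ a → a ≤ b → b ≤ 1 →
      sd (γ a) (γ b) ≤ (eVariationOn γ (Set.Icc a b)).toReal := by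
    intro a b h0 hab hb1
    have h := sd_le_evar hab (hcont.mono (Set.Icc_subset_Icc h0 hb1))
      (fun t ht => hsphere t ⟨h0.trans ht.1, ht.2.trans hb1⟩)
    exact (ENNReal.ofReal_le_iff_le_toReal (hfinsub a b h0 hb1)).1 h
  have sd_lt_pi_inner : ∀ x y : EuclideanSpace ℝ (Fin 3), sd x y < π → -1 < ⟪x, y⟫ := by
    intro x y hxy
    by_contra hle
    push_neg at hle
    rw [sd, Real.arccos_of_le_neg_one hle] at hxy
    exact lt_irrefl _ hxy
  set p := γ 0 with hpdef
  set q := γ c with hqdef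
  have hp1 : ‖p‖ = 1 := hsphere 0 ⟨le_rfl, zero_le_one⟩
  have hq1 : ‖q‖ = 1 := hsphere c ⟨hc0, hc1⟩
  have hpq : sd p q < π := lt_of_le_of_lt (sdle 0 c le_rfl hc0 hc1) hρcπ
  have hipq : -1 < ⟪p, q⟫ := sd_lt_pi_inner _ _ hpq
  have hpqsq : ‖p + q‖ ^ 2 = 2 + 2 * ⟪p, q⟫ := by
    rw [norm_add_sq_real, hp1, hq1]; ring
  have hnpq : 0 < ‖p + q‖ := by nlinarith [norm_nonneg (p + q)]
  set m := ‖p + q‖⁻¹ • (p + q) with hmdef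
  have hm1 : ‖m‖ = 1 := by
    rw [hmdef, norm_smul, norm_inv, norm_norm, inv_mul_cancel₀ hnpq.ne']
  have hxm : ∀ x : EuclideanSpace ℝ (Fin 3), ⟪x, m⟫ * ‖p + q‖ = ⟪x, p⟫ + ⟪x, q⟫ := by
    intro x
    rw [hmdef, real_inner_smul_right, inner_add_right]
    field_simp
  have hpm : ⟪p, m⟫ = ‖p + q‖ / 2 := by
    have h1 := hxm p
    have h2 : ⟪p, p⟫ = 1 := by rw [real_inner_self_eq_norm_sq, hp1]; norm_num
    rw [h2] at h1
    -- ⟪p,m⟫ * ‖p+q‖ = 1 + ⟪p,q⟫ = ‖p+q‖^2/2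
    have h3 : ⟪p, m⟫ * ‖p + q‖ = ‖p + q‖ ^ 2 / 2 := by rw [h1]; nlinarith
    have h4 : ⟪p, m⟫ = ‖p + q‖ ^ 2 / 2 / ‖p + q‖ := by
      rw [← h3, mul_div_assoc, div_self hnpq.ne', mul_one]
    rw [h4]
    field_simp
  have key : ∀ t ∈ Set.Icc (0:ℝ) 1, ⟪γ t, m⟫ ≠ 0 := by
    intro t ht
    set x := γ t with hxdef
    have hx1 : ‖x‖ = 1 := hsphere t ht
    have hbound : sd x p + sd x q < π := by
      rcases le_total t c with htc | htc
      · have h1 : sd p x ≤ (eVariationOn γ (Set.Icc 0 t)).toReal := sdle 0 t le_rfl ht.1 (htc.trans hc1)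
        have h2 : sd x q ≤ (eVariationOn γ (Set.Icc t c)).toReal := sdle t c ht.1 htc hc1
        have h3 : (eVariationOn γ (Set.Icc 0 t)).toReal + (eVariationOn γ (Set.Icc t c)).toReal = ρ c :=
          hadd 0 t c le_rfl ht.1 htc hc1
        have h4 : sd x p = sd p x := by rw [sd, sd, real_inner_comm]
        linarith
      · have h1 : sd q x ≤ (eVariationOn γ (Set.Icc c t)).toReal := sdle c t hc0 htc ht.2
        have h2 : sd x (γ 1) ≤ (eVariationOn γ (Set.Icc t 1)).toReal := sdle t 1 ht.1 ht.2 le_rfl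
        have h3 : (eVariationOn γ (Set.Icc c t)).toReal + (eVariationOn γ (Set.Icc t 1)).toReal = β :=
          hadd c t 1 hc0 htc ht.2 le_rfl
        have h4 : sd x q = sd q x := by rw [sd, sd, real_inner_comm]
        have h5 : sd x p = sd x (γ 1) := by rw [hclosed]
        linarith
    have hmm : ⟪m, m⟫ = 1 := by rw [real_inner_self_eq_norm_sq, hm1]; norm_num
    have hxx : ⟪x, x⟫ = 1 := by rw [real_inner_self_eq_norm_sq, hx1]; norm_num
    have hmx : ⟪m, x⟫ = ⟪x, m⟫ := real_inner_comm _ _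
    set x' := (2 * ⟪x, m⟫) • m - x with hx'def
    have hx'1 : ‖x'‖ = 1 := by
      have ha : ‖(2 * ⟪x, m⟫) • m‖ ^ 2 = (2 * ⟪x, m⟫) ^ 2 := by
        rw [norm_smul, Real.norm_eq_abs, hm1, mul_one, sq_abs]
      have hb : ⟪(2 * ⟪x, m⟫) • m, x⟫ = 2 * ⟪x, m⟫ * ⟪x, m⟫ := by
        rw [real_inner_smul_left, hmx]
      have h1 : ‖x'‖ ^ 2 = 1 := by
        rw [hx'def, norm_sub_sq_real, ha, hb, hx1]
        ring
      calc ‖x'‖ = √(‖x'‖ ^ 2) := (Real.sqrt_sq (norm_nonneg _)).symm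
        _ = 1 := by rw [h1]; exact Real.sqrt_one
    have hpx' : ⟪p, x'⟫ = ⟪q, x⟫ := by
      have h1 : ⟪p, x'⟫ = 2 * ⟪x, m⟫ * ⟪p, m⟫ - ⟪p, x⟫ := by
        rw [hx'def, inner_sub_right, real_inner_smul_right]
      have h2 : ⟪x, m⟫ * ‖p + q‖ = ⟪x, p⟫ + ⟪x, q⟫ := hxm x
      have h3 : ⟪q, x⟫ = ⟪x, q⟫ := real_inner_comm _ _
      have h4 : ⟪p, x⟫ = ⟪x, p⟫ := real_inner_comm _ _
      rw [h1, hpm, h3, h4]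
      nlinarith [h2]
    have htri : sd x x' ≤ sd x p + sd p x' := sd_triangle hx1 hp1 hx'1
    have hsdeq : sd p x' = sd q x := by rw [sd, sd, hpx']
    have hsdq : sd q x = sd x q := by rw [sd, sd, real_inner_comm]
    have hxx'lt : sd x x' < π := by linarith
    have hixx' : -1 < ⟪x, x'⟫ := sd_lt_pi_inner _ _ hxx'lt
    have hixx'eq : ⟪x, x'⟫ = 2 * ⟪x, m⟫ ^ 2 - 1 := by
      rw [hx'def, inner_sub_right, real_inner_smul_right, hxx]
      ring
    intro h0
    rw [hixx'eq, h0] at hixx'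
    norm_num at hixx'
  have hg0 : 0 < ⟪γ 0, m⟫ := by
    rw [← hpdef, hpm]
    positivity
  have hallpos : ∀ t ∈ Set.Icc (0:ℝ) 1, 0 < ⟪γ t, m⟫ := by
    intro t ht
    rcases lt_trichotomy (⟪γ t, m⟫) 0 with hneg | h0 | hpos
    · exfalso
      have hgc : ContinuousOn (fun s => ⟪γ s, m⟫) (Set.Icc (0:ℝ) 1) :=
        hcont.inner continuousOn_const
      have huIcc : Set.uIcc (0:ℝ) t = Set.Icc 0 t := Set.uIcc_of_le ht.1
      have hsub : Set.Icc (0:ℝ) t ⊆ Set.Icc (0:ℝ) 1 := Set.Icc_subset_Icc le_rfl ht.2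
      have hIVT := intermediate_value_uIcc (a := (0:ℝ)) (b := t)
        (f := fun s => ⟪γ s, m⟫) (by rw [huIcc]; exact hgc.mono hsub)
      have h0mem : (0:ℝ) ∈ Set.uIcc (⟪γ 0, m⟫) (⟪γ t, m⟫) :=
        Set.mem_uIcc.2 (Or.inr ⟨hneg.le, hg0.le⟩)
      obtain ⟨s, hs, hgs⟩ := hIVT h0mem
      rw [huIcc] at hs
      exact key s (hsub hs) hgs
    · exact absurd h0 (key t ht)
    · exact hpos
  have hconv : Convex ℝ {y : EuclideanSpace ℝ (Fin 3) | 0 < ⟪m, y⟫} :=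
    convex_halfSpace_gt ⟨fun u v => inner_add_right m u v, fun r u => real_inner_smul_right m u r⟩ 0
  have hsubset : γ '' Set.Icc 0 1 ⊆ {y : EuclideanSpace ℝ (Fin 3) | 0 < ⟪m, y⟫} := by
    rintro _ ⟨t, ht, rfl⟩
    rw [Set.mem_setOf_eq, real_inner_comm]
    exact hallpos t ht
  have hfinal := convexHull_min hsubset hconv hhull
  rw [Set.mem_setOf_eq, inner_zero_right] at hfinal
  exact lt_irrefl _ hfinal
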